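/- arXiv:1805.01462 — 2 statements merged into one kernel-verified Lean document; each statement's English description precedes it below -/
import Mathlib

section
/- For fixed x > 0 and α > -1, the function β ↦ H(β) = Γ(β+1) · μ(x, β, α) = ∫₀^∞ x^(t+α) t^β / Γ(t+α+1) dt is log-convex on (-1, ∞): for all β₁, β₂ > -1 and all λ ∈ [0, 1], one has H(λβ₁ + (1-λ)β₂) ≤ H(β₁)^λ · H(β₂)^(1-λ). -/
open MeasureTheory Real Set

/-- The Volterra function `μ(x, β, α) = ∫₀^∞ x^(t+α) t^β / (Γ(t+α+1) Γ(β+1)) dt`. -/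
noncomputable def volterraMu (x β α : ℝ) : ℝ :=
  ∫ t in Set.Ioi (0 : ℝ),
    x ^ (t + α) * t ^ β / (Real.Gamma (t + α + 1) * Real.Gamma (β + 1))

/-- Exponential-type lower bound for the Gamma function. -/
lemma gamma_lower_aux {s M : ℝ} (hs : 1 ≤ s) (hM : 1 ≤ M) :
    M ^ (s - 1) * Real.exp (-(M + 1)) ≤ Real.Gamma s := by
  have hs0 : 0 < s := lt_of_lt_of_le one_pos hs
  have hM0 : (0:ℝ) ≤ M := le_trans zero_le_one hM
  rw [Real.Gamma_eq_integral hs0]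
  have hsub : Ioc M (M + 1) ⊆ Ioi (0 : ℝ) := fun u hu =>
    lt_of_lt_of_le (lt_of_lt_of_le one_pos hM) (le_of_lt hu.1)
  have hint : IntegrableOn (fun u : ℝ => Real.exp (-u) * u ^ (s - 1)) (Ioi 0) :=
    Real.GammaIntegral_convergent hs0
  have h1 : ∫ u in Ioc M (M + 1), Real.exp (-u) * u ^ (s - 1) ≤
      ∫ u in Ioi (0 : ℝ), Real.exp (-u) * u ^ (s - 1) := by
    refine setIntegral_mono_set hint ?_ (HasSubset.Subset.eventuallyLE hsub)
    filter_upwards [ae_restrict_mem measurableSet_Ioi] with u hu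
    exact mul_nonneg (Real.exp_pos _).le (Real.rpow_nonneg (le_of_lt hu) _)
  refine le_trans ?_ h1
  have hvol : volume (Ioc M (M + 1)) ≠ ⊤ := by simp
  have hconst : ∀ u ∈ Ioc M (M + 1),
      M ^ (s - 1) * Real.exp (-(M + 1)) ≤ Real.exp (-u) * u ^ (s - 1) := by
    intro u hu
    rw [mul_comm]
    refine mul_le_mul (Real.exp_le_exp.2 (by linarith [hu.2]))
      (Real.rpow_le_rpow hM0 hu.1.le (by linarith)) (Real.rpow_nonneg hM0 _)
      (Real.exp_pos _).le
  have h2 := setIntegral_ge_of_const_le measurableSet_Ioc hvol hconst (hint.mono_set hsub)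
  rw [Real.volume_real_Ioc_of_le (by linarith), show M + 1 - M = 1 by ring,
    one_smul] at h2
  exact h2

lemma volterra_cont (x α β : ℝ) (hx : 0 < x) (hα : -1 < α) :
    ContinuousOn (fun t : ℝ => x ^ (t + α) * t ^ β / Real.Gamma (t + α + 1)) (Ioi 0) := by
  have h1 : Continuous fun t : ℝ => x ^ (t + α) :=
    Continuous.rpow continuous_const (continuous_id.add continuous_const) fun _ => Or.inl hx.ne'
  refine ContinuousOn.div (h1.continuousOn.mul ?_) ?_ ?_
  · exact continuousOn_of_forall_continuousAt fun t ht =>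
      Real.continuousAt_rpow_const _ _ (Or.inl (ne_of_gt ht))
  · intro t ht
    have ht0 : 0 < t := ht
    have h0 : 0 < t + α + 1 := by linarith
    have hG : ContinuousAt Real.Gamma (t + α + 1) :=
      (Real.differentiableAt_Gamma fun m =>
        (lt_of_le_of_lt (neg_nonpos.mpr (Nat.cast_nonneg m)) h0).ne').continuousAt
    have hin : ContinuousAt (fun s : ℝ => s + α + 1) t := by fun_prop
    exact (ContinuousAt.comp (g := Real.Gamma) (f := fun s : ℝ => s + α + 1) (x := t)
      hG hin).continuousWithinAt
  · intro t ht
    have ht0 : 0 < t := ht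
    exact (Real.Gamma_pos_of_pos (by linarith : 0 < t + α + 1)).ne'

lemma volterra_integrable (x α β : ℝ) (hx : 0 < x) (hα : -1 < α) (hβ : -1 < β) :
    IntegrableOn (fun t : ℝ => x ^ (t + α) * t ^ β / Real.Gamma (t + α + 1)) (Ioi 0) := by
  have hcont := volterra_cont x α β hx hα
  rw [← Ioc_union_Ioi_eq_Ioi (zero_le_one (α := ℝ)), integrableOn_union]
  constructor
  · -- on Ioc 0 1
    have hP : ContinuousOn (fun t : ℝ => x ^ (t + α) / Real.Gamma (t + α + 1)) (Icc 0 1) := by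
      have h1 : Continuous fun t : ℝ => x ^ (t + α) :=
        Continuous.rpow continuous_const (continuous_id.add continuous_const)
          fun _ => Or.inl hx.ne'
      refine ContinuousOn.div h1.continuousOn ?_ ?_
      · intro t ht
        have h0 : 0 < t + α + 1 := by have := ht.1; linarith
        have hG : ContinuousAt Real.Gamma (t + α + 1) :=
          (Real.differentiableAt_Gamma fun m =>
            (lt_of_le_of_lt (neg_nonpos.mpr (Nat.cast_nonneg m)) h0).ne').continuousAt
        have hin : ContinuousAt (fun s : ℝ => s + α + 1) t := by fun_prop
        exact (ContinuousAt.comp (g := Real.Gamma) (f := fun s : ℝ => s + α + 1) (x := t)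
      hG hin).continuousWithinAt
      · intro t ht
        exact (Real.Gamma_pos_of_pos (by have := ht.1; linarith : 0 < t + α + 1)).ne'
    obtain ⟨C, hC⟩ := isCompact_Icc.exists_bound_of_continuousOn hP
    have hg : IntegrableOn (fun t : ℝ => C * t ^ β) (Ioc (0:ℝ) 1) := by
      have := (intervalIntegral.intervalIntegrable_rpow' (a := (0:ℝ)) (b := 1) hβ)
      rw [intervalIntegrable_iff_integrableOn_Ioc_of_le zero_le_one] at this
      exact this.const_mul C
    refine Integrable.mono' hg ((hcont.mono Ioc_subset_Ioi_self).aestronglyMeasurable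
      measurableSet_Ioc) ?_
    filter_upwards [ae_restrict_mem measurableSet_Ioc] with t ht
    have ht0 : 0 < t := ht.1
    have hΓ : 0 < Real.Gamma (t + α + 1) := Real.Gamma_pos_of_pos (by linarith)
    have hbd := hC t ⟨ht0.le, ht.2⟩
    rw [Real.norm_of_nonneg (by positivity)]
    calc x ^ (t + α) * t ^ β / Real.Gamma (t + α + 1)
        = (x ^ (t + α) / Real.Gamma (t + α + 1)) * t ^ β := by ring
      _ ≤ C * t ^ β := by
          refine mul_le_mul_of_nonneg_right ?_ (Real.rpow_nonneg ht0.le _)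
          exact le_trans (le_abs_self _) hbd
  · -- on Ioi 1
    set M : ℝ := max 1 (Real.exp 1 * x) with hMdef
    have hM1 : 1 ≤ M := le_max_left _ _
    have hM0 : 0 < M := lt_of_lt_of_le one_pos hM1
    have hxM : x / M ≤ Real.exp (-1) := by
      rw [div_le_iff₀ hM0, Real.exp_neg]
      calc x = (Real.exp 1)⁻¹ * (Real.exp 1 * x) := by
              field_simp
        _ ≤ (Real.exp 1)⁻¹ * M := by
              exact mul_le_mul_of_nonneg_left (le_max_right _ _) (by positivity)
    have hg : IntegrableOn (fun t : ℝ => Real.exp (-t) * t ^ β) (Ioi 0) := by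
      have := Real.GammaIntegral_convergent (show (0:ℝ) < β + 1 by linarith)
      simpa using this
    refine Integrable.mono'
      (((hg.mono_set (Ioi_subset_Ioi zero_le_one)).const_mul (Real.exp (M + 1 - α))))
      ((hcont.mono (Ioi_subset_Ioi zero_le_one)).aestronglyMeasurable measurableSet_Ioi) ?_
    filter_upwards [ae_restrict_mem measurableSet_Ioi] with t ht
    have ht1 : 1 < t := ht
    have ht0 : 0 < t := lt_trans one_pos ht1
    have htα : (0:ℝ) ≤ t + α := by linarith
    have hΓ : 0 < Real.Gamma (t + α + 1) := Real.Gamma_pos_of_pos (by linarith)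
    have hlow : M ^ (t + α) * Real.exp (-(M + 1)) ≤ Real.Gamma (t + α + 1) := by
      have h := gamma_lower_aux (s := t + α + 1) (by linarith) hM1
      rwa [show t + α + 1 - 1 = t + α by ring] at h
    rw [Real.norm_of_nonneg (by positivity)]
    calc x ^ (t + α) * t ^ β / Real.Gamma (t + α + 1)
        ≤ x ^ (t + α) * t ^ β / (M ^ (t + α) * Real.exp (-(M + 1))) := by
          gcongr
      _ = Real.exp (M + 1) * ((x / M) ^ (t + α) * t ^ β) := by
          rw [Real.div_rpow hx.le hM0.le, Real.exp_neg]
          have hMp : M ^ (t + α) ≠ 0 := (Real.rpow_pos_of_pos hM0 _).ne'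
          field_simp
      _ ≤ Real.exp (M + 1) * (Real.exp (-1) ^ (t + α) * t ^ β) := by
          gcongr
      _ = Real.exp (M + 1 - α) * (Real.exp (-t) * t ^ β) := by
          rw [← Real.exp_mul, ← mul_assoc, ← Real.exp_add,
            show M + 1 + -1 * (t + α) = (M + 1 - α) + -t by ring, Real.exp_add, mul_assoc]

/-- For fixed `x > 0` and `α > -1`, `β ↦ H(β) = Γ(β+1) μ(x, β, α)` is log-convex on
`(-1, ∞)`. -/
theorem volterraMu_H_logConvex (x α : ℝ) (hx : 0 < x) (hα : -1 < α) :
    ∀ β₁ β₂ : ℝ, -1 < β₁ → -1 < β₂ → ∀ l : ℝ, l ∈ Set.Icc (0 : ℝ) 1 →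
      Real.Gamma (l * β₁ + (1 - l) * β₂ + 1) *
          volterraMu x (l * β₁ + (1 - l) * β₂) α ≤
        (Real.Gamma (β₁ + 1) * volterraMu x β₁ α) ^ l *
          (Real.Gamma (β₂ + 1) * volterraMu x β₂ α) ^ (1 - l) := by
  intro β₁ β₂ hβ₁ hβ₂ l hl
  obtain ⟨hl0, hl1⟩ := hl
  have key : ∀ β : ℝ, -1 < β → Real.Gamma (β + 1) * volterraMu x β α =
      ∫ t in Ioi (0:ℝ), x ^ (t + α) * t ^ β / Real.Gamma (t + α + 1) := by
    intro β hβ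
    have hΓ : Real.Gamma (β + 1) ≠ 0 := (Real.Gamma_pos_of_pos (by linarith)).ne'
    rw [volterraMu]
    simp_rw [div_mul_eq_div_div, div_eq_mul_inv _ (Real.Gamma (β + 1))]
    rw [integral_mul_const, mul_comm, mul_assoc, inv_mul_cancel₀ hΓ, mul_one]
  have hmid : -1 < l * β₁ + (1 - l) * β₂ := by
    rcases eq_or_lt_of_le hl0 with h | h
    · rw [← h]; simpa using hβ₂
    · nlinarith [mul_le_mul_of_nonneg_left hβ₂.le (by linarith : (0:ℝ) ≤ 1 - l),
        mul_lt_mul_of_pos_left hβ₁ h]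
  rw [key _ hmid, key _ hβ₁, key _ hβ₂]
  rcases eq_or_lt_of_le hl0 with h0 | h0
  · simp [← h0]
  rcases eq_or_lt_of_le hl1 with h1 | h1
  · simp [h1]
  have hb0 : 0 < 1 - l := by linarith
  have e : Real.HolderConjugate (1 / l) (1 / (1 - l)) :=
    Real.holderConjugate_one_div h0 hb0 (by ring)
  set F : ℝ → ℝ → ℝ → ℝ :=
    fun c u t => (x ^ (t + α) * t ^ u / Real.Gamma (t + α + 1)) ^ c with hF
  have posf : ∀ c u t, t ∈ Ioi (0:ℝ) → 0 ≤ F c u t := by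
    intro c u t ht
    have ht0 : 0 < t := ht
    have hΓ : 0 < Real.Gamma (t + α + 1) := Real.Gamma_pos_of_pos (by linarith)
    simp only [hF]
    positivity
  have posf' : ∀ c u, 0 ≤ᵐ[volume.restrict (Ioi 0)] F c u := fun c u =>
    (ae_restrict_iff' measurableSet_Ioi).mpr (ae_of_all _ (posf c u))
  have fpow : ∀ {c : ℝ}, 0 < c → ∀ (u : ℝ) {t : ℝ}, 0 < t →
      F c u t ^ (1 / c) = x ^ (t + α) * t ^ u / Real.Gamma (t + α + 1) := by
    intro c hc u t ht
    have hΓ : 0 < Real.Gamma (t + α + 1) := Real.Gamma_pos_of_pos (by linarith)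
    simp only [hF]
    rw [← Real.rpow_mul (by positivity), mul_one_div, div_self hc.ne', Real.rpow_one]
  have f_mem : ∀ {c u : ℝ}, 0 < c → -1 < u →
      MemLp (F c u) (ENNReal.ofReal (1 / c)) (volume.restrict (Ioi 0)) := by
    intro c u hc hu
    have A : ENNReal.ofReal (1 / c) ≠ 0 := by
      rwa [Ne, ENNReal.ofReal_eq_zero, not_le, one_div_pos]
    have B : ENNReal.ofReal (1 / c) ≠ ⊤ := ENNReal.ofReal_ne_top
    have hsm : AEStronglyMeasurable (F c u) (volume.restrict (Ioi 0)) :=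
      ((volterra_cont x α u hx hα).rpow_const
        (fun t _ => Or.inr hc.le)).aestronglyMeasurable measurableSet_Ioi
    rw [← memLp_norm_rpow_iff hsm A B, ENNReal.toReal_ofReal (one_div_nonneg.mpr hc.le),
      ENNReal.div_self A B, memLp_one_iff_integrable]
    apply (volterra_integrable x α u hx hα hu).congr
    refine Filter.eventuallyEq_of_mem (self_mem_ae_restrict measurableSet_Ioi) fun t ht => ?_
    rw [← fpow hc u (mem_Ioi.mp ht)]
    congr 1
    exact (Real.norm_of_nonneg (posf c u t ht)).symm
  convert MeasureTheory.integral_mul_le_Lp_mul_Lq_of_nonneg e (posf' l β₁) (posf' (1 - l) β₂)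
      (f_mem h0 hβ₁) (f_mem hb0 hβ₂) using 1
  · refine setIntegral_congr_fun measurableSet_Ioi fun t ht => ?_
    have ht0 : 0 < t := ht
    have hΓ : 0 < Real.Gamma (t + α + 1) := Real.Gamma_pos_of_pos (by linarith)
    have hP : 0 < x ^ (t + α) / Real.Gamma (t + α + 1) := by positivity
    show x ^ (t + α) * t ^ (l * β₁ + (1 - l) * β₂) / Real.Gamma (t + α + 1)
        = F l β₁ t * F (1 - l) β₂ t
    simp only [hF]
    have h1 : ∀ u : ℝ, x ^ (t + α) * t ^ u / Real.Gamma (t + α + 1)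
        = (x ^ (t + α) / Real.Gamma (t + α + 1)) * t ^ u := fun u => by ring
    rw [h1, h1, h1]
    rw [Real.mul_rpow hP.le (Real.rpow_nonneg ht0.le _),
      Real.mul_rpow hP.le (Real.rpow_nonneg ht0.le _),
      ← Real.rpow_mul ht0.le, ← Real.rpow_mul ht0.le]
    calc (x ^ (t + α) / Real.Gamma (t + α + 1)) * t ^ (l * β₁ + (1 - l) * β₂)
        = ((x ^ (t + α) / Real.Gamma (t + α + 1)) ^ l
            * (x ^ (t + α) / Real.Gamma (t + α + 1)) ^ (1 - l))
            * (t ^ (β₁ * l) * t ^ (β₂ * (1 - l))) := by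
          rw [← Real.rpow_add hP, ← Real.rpow_add ht0,
            show l + (1 - l) = 1 by ring, Real.rpow_one,
            show β₁ * l + β₂ * (1 - l) = l * β₁ + (1 - l) * β₂ by ring]
      _ = _ := by ring
  · rw [one_div_one_div, one_div_one_div]
    congr 2 <;>
      exact setIntegral_congr_fun measurableSet_Ioi
        (fun t ht => (fpow (by assumption) _ (mem_Ioi.mp ht)).symm)
end

section
/- For all α, β > -1 and x > 0, the double Turán-type inequality 0 ≤ μ(x, β+1, α)² − μ(x, β, α) · μ(x, β+2, α) ≤ μ(x, β+1, α)² / (β + 2) holds. -/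
open MeasureTheory Real Set

namespace VolterraAux

open Filter Topology

/-- log of Gamma -/
noncomputable def lg : ℝ → ℝ := Real.log ∘ Real.Gamma

/-- digamma -/
noncomputable def ph : ℝ → ℝ := deriv lg

/-- the weight `x^(t+α)/Γ(t+α+1)` written as an exponential -/
noncomputable def vg (x α : ℝ) : ℝ → ℝ :=
  fun t => Real.exp ((t + α) * Real.log x - lg (t + α + 1))

lemma gamma_ne {u : ℝ} (hu : 0 < u) : Real.Gamma u ≠ 0 :=
  (Real.Gamma_pos_of_pos hu).ne'

lemma diffGamma {u : ℝ} (hu : 0 < u) : DifferentiableAt ℝ Real.Gamma u :=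
  Real.differentiableAt_Gamma fun m =>
    ((neg_nonpos.mpr (Nat.cast_nonneg m)).trans_lt hu).ne'

lemma diff_lg {u : ℝ} (hu : 0 < u) : DifferentiableAt ℝ lg u :=
  (diffGamma hu).log (gamma_ne hu)

lemma lg_hasDeriv {u : ℝ} (hu : 0 < u) : HasDerivAt lg (ph u) u :=
  (diff_lg hu).hasDerivAt

lemma ph_mono {u v : ℝ} (hu : 0 < u) (huv : u ≤ v) : ph u ≤ ph v := by
  rcases eq_or_lt_of_le huv with rfl | h
  · exact le_rfl
  · have hv : 0 < v := hu.trans h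
    have h1 := Real.convexOn_log_Gamma.deriv_le_slope (mem_Ioi.mpr hu) (mem_Ioi.mpr hv) h
      (diff_lg hu)
    have h2 := Real.convexOn_log_Gamma.slope_le_deriv (mem_Ioi.mpr hu) (mem_Ioi.mpr hv) h
      (diff_lg hv)
    exact h1.trans h2

lemma ph_le_log {u : ℝ} (hu : 0 < u) : ph u ≤ Real.log u := by
  have h := Real.convexOn_log_Gamma.deriv_le_slope (mem_Ioi.mpr hu)
    (mem_Ioi.mpr (by linarith : (0:ℝ) < u + 1)) (lt_add_one u) (diff_lg hu)
  rw [slope_def_field] at h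
  have hΓ : lg (u + 1) = Real.log u + lg u := by
    simp only [lg, Function.comp_apply, Real.Gamma_add_one hu.ne',
      Real.log_mul hu.ne' (gamma_ne hu)]
  calc ph u ≤ (lg (u + 1) - lg u) / (u + 1 - u) := h
    _ = Real.log u := by rw [hΓ]; ring_nf

lemma vg_pos (x α t : ℝ) : 0 < vg x α t := Real.exp_pos _

lemma vg_eq {x : ℝ} (hx : 0 < x) {α t : ℝ} (h : 0 < t + α + 1) :
    vg x α t = x ^ (t + α) / Real.Gamma (t + α + 1) := by
  rw [vg, Real.exp_sub, Real.rpow_def_of_pos hx, mul_comm]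
  congr 1
  exact Real.exp_log (Real.Gamma_pos_of_pos h)

lemma vg_hasDeriv {x : ℝ} (hx : 0 < x) {α t : ℝ} (h : 0 < t + α + 1) :
    HasDerivAt (vg x α) (vg x α t * (Real.log x - ph (t + α + 1))) t := by
  have ha : HasDerivAt (fun t : ℝ => (t + α) * Real.log x) (Real.log x) t := by
    simpa using ((hasDerivAt_id t).add_const α).mul_const (Real.log x)
  have hb : HasDerivAt (fun t : ℝ => lg (t + α + 1)) (ph (t + α + 1)) t := by
    have := (lg_hasDeriv h).comp t (((hasDerivAt_id t).add_const α).add_const 1)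
    simpa [Function.comp_def] using this
  have h1 := (ha.sub hb).exp
  exact h1

lemma vg_contAt {x : ℝ} (hx : 0 < x) {α t : ℝ} (h : 0 < t + α + 1) :
    ContinuousAt (vg x α) t := (vg_hasDeriv hx h).continuousAt

end VolterraAux

namespace VolterraAux

lemma Gamma_ge_inv_e {u : ℝ} (hu : 1 ≤ u) : Real.exp (-1) ≤ Real.Gamma u := by
  have hu0 : 0 < u := lt_of_lt_of_le one_pos hu
  rw [Real.Gamma_eq_integral hu0]
  have h1 : (∫ t in Ioi (1:ℝ), Real.exp (-t)) ≤
      ∫ t in Ioi (1:ℝ), Real.exp (-t) * t ^ (u - 1) := by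
    refine setIntegral_mono_on ?_ ?_ measurableSet_Ioi ?_
    · exact (exp_neg_integrableOn_Ioi 1 one_pos).congr_fun
        (fun t _ => by norm_num) measurableSet_Ioi
    · exact (Real.GammaIntegral_convergent hu0).mono_set
        (Ioi_subset_Ioi zero_le_one)
    · intro t ht
      nth_rewrite 1 [← mul_one (Real.exp (-t))]
      refine mul_le_mul_of_nonneg_left ?_ (Real.exp_pos _).le
      exact Real.one_le_rpow (le_of_lt ht) (by linarith)
  have h2 : (∫ t in Ioi (1:ℝ), Real.exp (-t) * t ^ (u - 1)) ≤
      ∫ t in Ioi (0:ℝ), Real.exp (-t) * t ^ (u - 1) := by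
    refine setIntegral_mono_set (Real.GammaIntegral_convergent hu0) ?_
      (HasSubset.Subset.eventuallyLE (Ioi_subset_Ioi zero_le_one))
    filter_upwards [ae_restrict_mem measurableSet_Ioi] with t ht
    exact mul_nonneg (Real.exp_pos _).le (Real.rpow_nonneg (le_of_lt ht) _)
  calc Real.exp (-1) = ∫ t in Ioi (1:ℝ), Real.exp (-t) := (integral_exp_neg_Ioi 1).symm
    _ ≤ _ := h1.trans h2

lemma Gamma_fac (n : ℕ) {u : ℝ} (hu : 1 ≤ u) :
    (n.factorial : ℝ) * Real.exp (-1) ≤ Real.Gamma (u + n) := by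
  induction n with
  | zero => simpa using Gamma_ge_inv_e hu
  | succ n ih =>
    have h1 : Real.Gamma (u + ((n:ℝ) + 1)) = (u + n) * Real.Gamma (u + n) := by
      rw [show (u + (↑n + 1) : ℝ) = (u + n) + 1 by push_cast; ring]
      exact Real.Gamma_add_one (by positivity : (0:ℝ) < u + n).ne'
    have h2 : (0:ℝ) < Real.Gamma (u + n) := Real.Gamma_pos_of_pos (by positivity)
    have h3 : (1 + n : ℝ) ≤ u + n := by linarith
    have hcast : ((n+1 : ℕ) : ℝ) = (n:ℝ) + 1 := by push_cast; ring
    rw [hcast]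
    calc ((n+1).factorial : ℝ) * Real.exp (-1) = (1 + n) * ((n.factorial : ℝ) * Real.exp (-1)) := by
          rw [Nat.factorial_succ]; push_cast; ring
      _ ≤ (u + n) * ((n.factorial : ℝ) * Real.exp (-1)) :=
          mul_le_mul_of_nonneg_right h3 (by positivity)
      _ ≤ (u + n) * Real.Gamma (u + n) := mul_le_mul_of_nonneg_left ih (by positivity)
      _ = Real.Gamma (u + ((n:ℝ) + 1)) := h1.symm

lemma exp_le_Gamma {c : ℝ} (hc : 0 < c) (A : ℝ) :
    ∃ C T : ℝ, 0 < C ∧ ∀ t : ℝ, T ≤ t → Real.exp (A * t) ≤ C * Real.Gamma (t + c) := by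
  obtain ⟨N, hN⟩ := Filter.eventually_atTop.mp
    ((FloorSemiring.tendsto_pow_div_factorial_atTop (Real.exp |A|)).eventually_lt_const
      one_pos)
  refine ⟨Real.exp (|A| * (2 + |c|)) * Real.exp 1, max (2 - c) (N + 1 - c), by positivity, ?_⟩
  intro t ht
  have htA := le_trans (le_max_left _ _) ht
  have htB := le_trans (le_max_right _ _) ht
  have ht1 : 1 ≤ t + c - 1 := by linarith
  set n : ℕ := ⌊t + c - 1⌋₊ with hn
  have hfl : (n : ℝ) ≤ t + c - 1 := Nat.floor_le (by linarith)
  have hfl2 : t + c - 1 < n + 1 := Nat.lt_floor_add_one _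
  have hnN : N ≤ n := by
    have hr : (N:ℝ) < n + 1 := by linarith
    exact Nat.lt_succ_iff.mp (by exact_mod_cast hr)
  have hu : 1 ≤ t + c - n := by linarith
  have hΓ : ((n.factorial : ℝ)) * Real.exp (-1) ≤ Real.Gamma (t + c) := by
    have := Gamma_fac n hu
    rwa [show (t + c - n) + n = t + c by ring] at this
  have hpow : Real.exp |A| ^ n ≤ (n.factorial : ℝ) := by
    have h := hN n hnN
    rw [div_lt_one (by positivity)] at h
    exact h.le
  have habs : |t| ≤ (n:ℝ) + 2 + |c| := by
    rw [abs_le]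
    constructor
    · have := le_abs_self c; linarith
    · have := neg_abs_le c; linarith
  have hexp : Real.exp (A * t) ≤ Real.exp (|A| * (2 + |c|)) * Real.exp |A| ^ n := by
    rw [← Real.exp_nat_mul, ← Real.exp_add, Real.exp_le_exp]
    have h1 : A * t ≤ |A| * ((n:ℝ) + 2 + |c|) := by
      refine le_trans (le_abs_self _) ?_
      rw [abs_mul]
      exact mul_le_mul_of_nonneg_left habs (abs_nonneg A)
    nlinarith [abs_nonneg A]
  have hee : Real.exp 1 * Real.exp (-1) = 1 := by rw [← Real.exp_add]; norm_num
  calc Real.exp (A * t) ≤ Real.exp (|A| * (2 + |c|)) * Real.exp |A| ^ n := hexp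
    _ ≤ Real.exp (|A| * (2 + |c|)) * (n.factorial : ℝ) :=
        mul_le_mul_of_nonneg_left hpow (by positivity)
    _ = Real.exp (|A| * (2 + |c|)) * Real.exp 1 * ((n.factorial : ℝ) * Real.exp (-1)) := by
        rw [show Real.exp (|A| * (2 + |c|)) * Real.exp 1 * ((n.factorial : ℝ) * Real.exp (-1)) =
          Real.exp (|A| * (2 + |c|)) * (n.factorial : ℝ) * (Real.exp 1 * Real.exp (-1)) from by
            ring, hee, mul_one]
    _ ≤ Real.exp (|A| * (2 + |c|)) * Real.exp 1 * Real.Gamma (t + c) :=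
        mul_le_mul_of_nonneg_left hΓ (by positivity)

end VolterraAux

namespace VolterraAux

lemma decay {x α : ℝ} (hx : 0 < x) (hα : -1 < α) (s : ℝ) :
    ∃ C T : ℝ, 0 < C ∧ 1 ≤ T ∧ ∀ t : ℝ, T ≤ t →
      t ^ s * vg x α t ≤ C * Real.exp (-t) := by
  obtain ⟨C, T, hC, hT⟩ := exp_le_Gamma (by linarith : (0:ℝ) < α + 1)
    (|s| + |Real.log x| + 1)
  refine ⟨x ^ α * C, max T 1, by positivity, le_max_right _ _, ?_⟩
  intro t ht
  have ht1 : 1 ≤ t := le_trans (le_max_right _ _) ht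
  have htT : T ≤ t := le_trans (le_max_left _ _) ht
  have ht0 : 0 < t := lt_of_lt_of_le one_pos ht1
  have hc : 0 < t + α + 1 := by linarith
  have hΓ : 0 < Real.Gamma (t + α + 1) := Real.Gamma_pos_of_pos hc
  rw [vg_eq hx hc]
  have hlogt : 0 ≤ Real.log t := Real.log_nonneg ht1
  have hlt : Real.log t ≤ t := le_trans (Real.log_le_sub_one_of_pos ht0) (by linarith)
  -- numerator bound
  have hnum : t ^ s * x ^ (t + α) ≤ x ^ α * Real.exp ((|s| + |Real.log x|) * t) := by
    rw [Real.rpow_def_of_pos ht0, Real.rpow_def_of_pos hx, Real.rpow_def_of_pos hx,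
      ← Real.exp_add, ← Real.exp_add, Real.exp_le_exp]
    have h1 : Real.log t * s ≤ |s| * t := by
      calc Real.log t * s ≤ |Real.log t * s| := le_abs_self _
        _ = |s| * Real.log t := by rw [abs_mul, abs_of_nonneg hlogt, mul_comm]
        _ ≤ |s| * t := mul_le_mul_of_nonneg_left hlt (abs_nonneg s)
    have h2 : Real.log x * t ≤ |Real.log x| * t :=
      mul_le_mul_of_nonneg_right (le_abs_self _) ht0.le
    nlinarith
  have hden : Real.exp ((|s| + |Real.log x| + 1) * t) ≤ C * Real.Gamma (t + α + 1) := by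
    have := hT t htT
    rwa [show t + (α + 1) = t + α + 1 by ring] at this
  rw [← mul_div_assoc, div_le_iff₀ hΓ]
  calc t ^ s * x ^ (t + α) ≤ x ^ α * Real.exp ((|s| + |Real.log x|) * t) := hnum
    _ = x ^ α * Real.exp ((|s| + |Real.log x| + 1) * t) * Real.exp (-t) := by
        rw [mul_assoc, ← Real.exp_add]; ring_nf
    _ ≤ x ^ α * (C * Real.Gamma (t + α + 1)) * Real.exp (-t) := by
        refine mul_le_mul_of_nonneg_right ?_ (Real.exp_pos _).le
        exact mul_le_mul_of_nonneg_left hden (by positivity)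
    _ = x ^ α * C * Real.exp (-t) * Real.Gamma (t + α + 1) := by ring

lemma contOn_ts {x α : ℝ} (hx : 0 < x) (hα : -1 < α) (s : ℝ) :
    ContinuousOn (fun t => t ^ s * vg x α t) (Ioi (0:ℝ)) := by
  intro t ht
  have ht0 : (0:ℝ) < t := ht
  have hc : 0 < t + α + 1 := by linarith
  exact ((Real.continuousAt_rpow_const t s (Or.inl ht0.ne')).mul
    (vg_contAt hx hc)).continuousWithinAt

lemma integrable_ts {x α : ℝ} (hx : 0 < x) (hα : -1 < α) {s : ℝ} (hs : -1 < s) :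
    IntegrableOn (fun t => t ^ s * vg x α t) (Ioi (0:ℝ)) := by
  obtain ⟨C, T, hC, hT1, hbd⟩ := decay hx hα s
  have hT0 : (0:ℝ) < T := lt_of_lt_of_le one_pos hT1
  rw [← Ioc_union_Ioi_eq_Ioi hT0.le, integrableOn_union]
  constructor
  · -- on (0, T]
    have hvgcont : ContinuousOn (vg x α) (Icc (0:ℝ) T) := by
      intro t ht
      exact (vg_contAt hx (by linarith [ht.1] : 0 < t + α + 1)).continuousWithinAt
    obtain ⟨C₂, hC₂⟩ := isCompact_Icc.exists_bound_of_continuousOn hvgcont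
    have hrpow : IntegrableOn (fun t : ℝ => C₂ * t ^ s) (Ioc (0:ℝ) T) :=
      (intervalIntegral.intervalIntegrable_rpow' hs (a := 0) (b := T)).1.const_mul C₂
    refine Integrable.mono' hrpow ?_ ?_
    · exact ((contOn_ts hx hα s).mono Ioc_subset_Ioi_self).aestronglyMeasurable
        measurableSet_Ioc
    · filter_upwards [ae_restrict_mem measurableSet_Ioc] with t ht
      have ht0 : 0 < t := ht.1
      have hvg := vg_pos x α t
      rw [Real.norm_eq_abs, abs_of_nonneg (by positivity)]
      have h1 : vg x α t ≤ C₂ := le_trans (le_abs_self _)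
        (by simpa [Real.norm_eq_abs] using hC₂ t ⟨ht0.le, ht.2⟩)
      calc t ^ s * vg x α t ≤ t ^ s * C₂ :=
            mul_le_mul_of_nonneg_left h1 (Real.rpow_nonneg ht0.le s)
        _ = C₂ * t ^ s := by ring
  · -- on (T, ∞)
    have hexp : IntegrableOn (fun t : ℝ => C * Real.exp (-t)) (Ioi T) := by
      have := (exp_neg_integrableOn_Ioi T one_pos).const_mul C
      simp at this
      exact this
    refine Integrable.mono' hexp ?_ ?_
    · exact ((contOn_ts hx hα s).mono
        (Ioi_subset_Ioi hT0.le)).aestronglyMeasurable measurableSet_Ioi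
    · filter_upwards [ae_restrict_mem measurableSet_Ioi] with t ht
      have ht0 : 0 < t := lt_trans hT0 ht
      have hvg := vg_pos x α t
      rw [Real.norm_eq_abs, abs_of_nonneg (by positivity)]
      exact hbd t (le_of_lt ht)

lemma tendsto_ts {x α : ℝ} (hx : 0 < x) (hα : -1 < α) (s : ℝ) :
    Filter.Tendsto (fun t => t ^ s * vg x α t) Filter.atTop (nhds 0) := by
  obtain ⟨C, T, hC, hT1, hbd⟩ := decay hx hα s
  have h0 : Filter.Tendsto (fun t : ℝ => C * Real.exp (-t)) Filter.atTop (nhds 0) := by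
    have := Real.tendsto_exp_neg_atTop_nhds_zero.const_mul C
    simpa using this
  refine squeeze_zero' ?_ ?_ h0
  · filter_upwards [Filter.eventually_ge_atTop (1:ℝ)] with t ht
    have ht0 : 0 < t := lt_of_lt_of_le one_pos ht
    exact mul_nonneg (Real.rpow_nonneg ht0.le s) (vg_pos x α t).le
  · filter_upwards [Filter.eventually_ge_atTop T] with t ht
    exact hbd t ht

end VolterraAux

namespace VolterraAux

lemma ph_bound {α : ℝ} (hα : -1 < α) {t : ℝ} (ht : 0 < t) :
    |ph (t + α + 1)| ≤ |ph (α + 1)| + (t + α + 1) := by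
  have hc : (0:ℝ) < α + 1 := by linarith
  have hc' : (0:ℝ) < t + α + 1 := by linarith
  have h1 : ph (α + 1) ≤ ph (t + α + 1) := ph_mono hc (by linarith)
  have h2 : ph (t + α + 1) ≤ Real.log (t + α + 1) := ph_le_log hc'
  have h3 : Real.log (t + α + 1) ≤ t + α + 1 :=
    le_trans (Real.log_le_sub_one_of_pos hc') (by linarith)
  rw [abs_le]
  constructor
  · have := neg_abs_le (ph (α + 1)); linarith
  · have := le_abs_self (ph (α + 1)); linarith [abs_nonneg (ph (α + 1))]

lemma aesm_phts {x α : ℝ} (hx : 0 < x) (hα : -1 < α) (s : ℝ) :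
    AEStronglyMeasurable (fun t => t ^ s * vg x α t * ph (t + α + 1))
      (volume.restrict (Ioi (0:ℝ))) := by
  refine AEStronglyMeasurable.mul ?_ ?_
  · exact ((contOn_ts hx hα s)).aestronglyMeasurable measurableSet_Ioi
  · have hm : Measurable (fun t : ℝ => ph (t + α + 1)) :=
      (measurable_deriv lg).comp ((measurable_id.add_const α).add_const 1)
    exact hm.aestronglyMeasurable

lemma integrable_phts {x α : ℝ} (hx : 0 < x) (hα : -1 < α) {s : ℝ} (hs : -1 < s) :
    IntegrableOn (fun t => t ^ s * vg x α t * ph (t + α + 1)) (Ioi (0:ℝ)) := by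
  have hmaj : IntegrableOn
      (fun t => (|ph (α + 1)| + α + 1) * (t ^ s * vg x α t) + t ^ (s + 1) * vg x α t)
      (Ioi (0:ℝ)) :=
    ((integrable_ts hx hα hs).const_mul _).add (integrable_ts hx hα (by linarith))
  refine Integrable.mono' hmaj (aesm_phts hx hα s) ?_
  filter_upwards [ae_restrict_mem measurableSet_Ioi] with t ht
  have ht0 : (0:ℝ) < t := ht
  have hvg := vg_pos x α t
  have hts : (0:ℝ) ≤ t ^ s := Real.rpow_nonneg ht0.le s
  rw [Real.norm_eq_abs, abs_mul, abs_of_nonneg (by positivity : (0:ℝ) ≤ t ^ s * vg x α t)]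
  have hb := ph_bound hα ht0
  have key : t ^ s * vg x α t * |ph (t + α + 1)| ≤
      t ^ s * vg x α t * (|ph (α + 1)| + (t + α + 1)) :=
    mul_le_mul_of_nonneg_left hb (by positivity)
  have hexp : t ^ (s + 1) = t ^ s * t := by
    rw [Real.rpow_add ht0, Real.rpow_one]
  calc t ^ s * vg x α t * |ph (t + α + 1)| ≤
        t ^ s * vg x α t * (|ph (α + 1)| + (t + α + 1)) := key
    _ = (|ph (α + 1)| + α + 1) * (t ^ s * vg x α t) + t ^ (s + 1) * vg x α t := by
        rw [hexp]; ring

/-- Integration by parts identity. -/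
lemma ibp {x α : ℝ} (hx : 0 < x) (hα : -1 < α) {s : ℝ} (hs : 0 < s) :
    s * ∫ t in Ioi (0:ℝ), t ^ (s - 1) * vg x α t =
      ∫ t in Ioi (0:ℝ), t ^ s * vg x α t * (ph (t + α + 1) - Real.log x) := by
  set f : ℝ → ℝ := fun t => t ^ s * vg x α t with hf
  set f' : ℝ → ℝ := fun t =>
    s * (t ^ (s - 1) * vg x α t) + Real.log x * (t ^ s * vg x α t)
      - t ^ s * vg x α t * ph (t + α + 1) with hf'
  have hs1 : (-1:ℝ) < s - 1 := by linarith
  have hs0 : (-1:ℝ) < s := by linarith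
  have i1 : IntegrableOn (fun t => t ^ (s-1) * vg x α t) (Ioi (0:ℝ)) := integrable_ts hx hα hs1
  have i2 : IntegrableOn (fun t => t ^ s * vg x α t) (Ioi (0:ℝ)) := integrable_ts hx hα hs0
  have i3 : IntegrableOn (fun t => t ^ s * vg x α t * ph (t + α + 1)) (Ioi (0:ℝ)) :=
    integrable_phts hx hα hs0
  have f'int : IntegrableOn f' (Ioi (0:ℝ)) := ((i1.const_mul s).add (i2.const_mul _)).sub i3
  have hzero : (∫ t in Ioi (0:ℝ), f' t) = 0 := by
    have hcont : ContinuousWithinAt f (Ici 0) 0 := by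
      refine ContinuousAt.continuousWithinAt ?_
      exact (Real.continuousAt_rpow_const 0 s (Or.inr hs.le)).mul
        (vg_contAt hx (by linarith : (0:ℝ) < 0 + α + 1))
    have hderiv : ∀ t ∈ Ioi (0:ℝ), HasDerivAt f (f' t) t := by
      intro t ht
      have ht0 : (0:ℝ) < t := ht
      have hc : 0 < t + α + 1 := by linarith
      have h1 : HasDerivAt (fun t : ℝ => t ^ s) (s * t ^ (s - 1)) t :=
        Real.hasDerivAt_rpow_const (Or.inl ht0.ne')
      have h2 := h1.mul (vg_hasDeriv hx hc)
      refine h2.congr_deriv ?_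
      show _ = s * (t ^ (s - 1) * vg x α t) + Real.log x * (t ^ s * vg x α t)
        - t ^ s * vg x α t * ph (t + α + 1)
      ring
    have htend : Filter.Tendsto f Filter.atTop (nhds 0) := tendsto_ts hx hα s
    have := integral_Ioi_of_hasDerivAt_of_tendsto hcont hderiv f'int htend
    rw [this, hf]
    simp [Real.zero_rpow hs.ne']
  have i1' : IntegrableOn (fun t => s * (t ^ (s-1) * vg x α t)) (Ioi (0:ℝ)) := i1.const_mul s
  have i2' : IntegrableOn (fun t => Real.log x * (t ^ s * vg x α t)) (Ioi (0:ℝ)) :=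
    i2.const_mul _
  have i12 : IntegrableOn (fun t => s * (t ^ (s-1) * vg x α t)
      + Real.log x * (t ^ s * vg x α t)) (Ioi (0:ℝ)) := i1'.add i2'
  have hsplit : (∫ t in Ioi (0:ℝ), f' t) =
      s * (∫ t in Ioi (0:ℝ), t ^ (s-1) * vg x α t)
      + Real.log x * (∫ t in Ioi (0:ℝ), t ^ s * vg x α t)
      - ∫ t in Ioi (0:ℝ), t ^ s * vg x α t * ph (t + α + 1) := by
    rw [hf', integral_sub i12 i3, integral_add i1' i2', integral_const_mul, integral_const_mul]
  have hrhs : (∫ t in Ioi (0:ℝ), t ^ s * vg x α t * (ph (t + α + 1) - Real.log x)) =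
      (∫ t in Ioi (0:ℝ), t ^ s * vg x α t * ph (t + α + 1))
      - Real.log x * (∫ t in Ioi (0:ℝ), t ^ s * vg x α t) := by
    rw [← integral_const_mul, ← integral_sub i3 (i2.const_mul _)]
    congr 1
    funext t
    ring
  rw [hrhs]
  linarith [hsplit.symm.trans hzero]

end VolterraAux

namespace VolterraAux

lemma integrable_wts {x α : ℝ} (hx : 0 < x) (hα : -1 < α) {s : ℝ} (hs : -1 < s) :
    IntegrableOn (fun t => t ^ s * vg x α t * (ph (t + α + 1) - Real.log x))
      (Ioi (0:ℝ)) := by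
  have heq : (fun t : ℝ => t ^ s * vg x α t * (ph (t + α + 1) - Real.log x)) =
      fun t => t ^ s * vg x α t * ph (t + α + 1) - Real.log x * (t ^ s * vg x α t) := by
    funext t; ring
  rw [heq]
  exact (integrable_phts hx hα hs).sub ((integrable_ts hx hα hs).const_mul _)

lemma cs {x α : ℝ} (hx : 0 < x) (hα : -1 < α) {β : ℝ} (hβ : -1 < β) :
    (∫ t in Ioi (0:ℝ), t ^ (β+1) * vg x α t) ^ 2 ≤
      (∫ t in Ioi (0:ℝ), t ^ β * vg x α t) * (∫ t in Ioi (0:ℝ), t ^ (β+2) * vg x α t) := by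
  set μ' := volume.restrict (Ioi (0:ℝ)) with hμ'
  have i0 : Integrable (fun t => t ^ β * vg x α t) μ' := integrable_ts hx hα hβ
  have i1 : Integrable (fun t => t ^ (β+1) * vg x α t) μ' :=
    integrable_ts hx hα (by linarith)
  have i2 : Integrable (fun t => t ^ (β+2) * vg x α t) μ' :=
    integrable_ts hx hα (by linarith)
  have h1 : Integrable (fun z : ℝ × ℝ =>
      (z.1 ^ β * vg x α z.1) * (z.2 ^ (β+2) * vg x α z.2)) (μ'.prod μ') := i0.mul_prod i2
  have h2 : Integrable (fun z : ℝ × ℝ =>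
      (z.1 ^ (β+1) * vg x α z.1) * (z.2 ^ (β+1) * vg x α z.2)) (μ'.prod μ') := i1.mul_prod i1
  have h3 : Integrable (fun z : ℝ × ℝ =>
      (z.1 ^ (β+2) * vg x α z.1) * (z.2 ^ β * vg x α z.2)) (μ'.prod μ') := i2.mul_prod i0
  have h13 : Integrable (fun z : ℝ × ℝ =>
      (z.1 ^ β * vg x α z.1) * (z.2 ^ (β+2) * vg x α z.2)
      + (z.1 ^ (β+2) * vg x α z.1) * (z.2 ^ β * vg x α z.2)) (μ'.prod μ') := h1.add h3
  have h2' : Integrable (fun z : ℝ × ℝ =>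
      2 * ((z.1 ^ (β+1) * vg x α z.1) * (z.2 ^ (β+1) * vg x α z.2))) (μ'.prod μ') :=
    h2.const_mul 2
  have hae : ∀ᵐ z : ℝ × ℝ ∂(μ'.prod μ'), z.1 ∈ Ioi (0:ℝ) ∧ z.2 ∈ Ioi (0:ℝ) := by
    rw [hμ', Measure.prod_restrict]
    filter_upwards [ae_restrict_mem (measurableSet_Ioi.prod measurableSet_Ioi)] with z hz
    exact hz
  have key : 0 ≤ ∫ z : ℝ × ℝ,
      ((z.1 ^ β * vg x α z.1) * (z.2 ^ (β+2) * vg x α z.2)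
        + (z.1 ^ (β+2) * vg x α z.1) * (z.2 ^ β * vg x α z.2)
        - 2 * ((z.1 ^ (β+1) * vg x α z.1) * (z.2 ^ (β+1) * vg x α z.2))) ∂(μ'.prod μ') := by
    refine integral_nonneg_of_ae ?_
    filter_upwards [hae] with z hz
    obtain ⟨ht, hs⟩ := hz
    have ht0 : (0:ℝ) < z.1 := ht
    have hs0 : (0:ℝ) < z.2 := hs
    have e1 : z.1 ^ (β+1) = z.1 ^ β * z.1 := by rw [Real.rpow_add ht0, Real.rpow_one]
    have e2 : z.1 ^ (β+2) = z.1 ^ β * z.1 * z.1 := by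
      rw [show β+2 = β+1+1 by ring, Real.rpow_add ht0, Real.rpow_one, e1]
    have f1 : z.2 ^ (β+1) = z.2 ^ β * z.2 := by rw [Real.rpow_add hs0, Real.rpow_one]
    have f2 : z.2 ^ (β+2) = z.2 ^ β * z.2 * z.2 := by
      rw [show β+2 = β+1+1 by ring, Real.rpow_add hs0, Real.rpow_one, f1]
    have expand : (z.1 ^ β * vg x α z.1) * (z.2 ^ (β+2) * vg x α z.2)
        + (z.1 ^ (β+2) * vg x α z.1) * (z.2 ^ β * vg x α z.2)
        - 2 * ((z.1 ^ (β+1) * vg x α z.1) * (z.2 ^ (β+1) * vg x α z.2)) =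
        ((z.1 ^ β * z.2 ^ β) * (vg x α z.1 * vg x α z.2)) * (z.1 - z.2) ^ 2 := by
      rw [e1, e2, f1, f2]; ring
    rw [expand]
    have hv1 := (vg_pos x α z.1).le
    have hv2 := (vg_pos x α z.2).le
    exact mul_nonneg (mul_nonneg
      (mul_nonneg (Real.rpow_nonneg ht0.le β) (Real.rpow_nonneg hs0.le β))
      (mul_nonneg hv1 hv2)) (sq_nonneg _)
  have p1 : (∫ z : ℝ × ℝ, (z.1 ^ β * vg x α z.1) * (z.2 ^ (β+2) * vg x α z.2)
      ∂(μ'.prod μ')) = (∫ t, t ^ β * vg x α t ∂μ') * ∫ t, t ^ (β+2) * vg x α t ∂μ' :=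
    integral_prod_mul (fun t => t ^ β * vg x α t) (fun t => t ^ (β+2) * vg x α t)
  have p2 : (∫ z : ℝ × ℝ, (z.1 ^ (β+1) * vg x α z.1) * (z.2 ^ (β+1) * vg x α z.2)
      ∂(μ'.prod μ')) = (∫ t, t ^ (β+1) * vg x α t ∂μ') * ∫ t, t ^ (β+1) * vg x α t ∂μ' :=
    integral_prod_mul (fun t => t ^ (β+1) * vg x α t) (fun t => t ^ (β+1) * vg x α t)
  have p3 : (∫ z : ℝ × ℝ, (z.1 ^ (β+2) * vg x α z.1) * (z.2 ^ β * vg x α z.2)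
      ∂(μ'.prod μ')) = (∫ t, t ^ (β+2) * vg x α t ∂μ') * ∫ t, t ^ β * vg x α t ∂μ' :=
    integral_prod_mul (fun t => t ^ (β+2) * vg x α t) (fun t => t ^ β * vg x α t)
  rw [integral_sub h13 h2', integral_add h1 h3, integral_const_mul, p1, p2, p3] at key
  nlinarith [key]

lemma turan {x α : ℝ} (hx : 0 < x) (hα : -1 < α) {β : ℝ} (hβ : -1 < β) :
    (β+1) * ((∫ t in Ioi (0:ℝ), t ^ β * vg x α t)
        * (∫ t in Ioi (0:ℝ), t ^ (β+2) * vg x α t)) ≤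
      (β+2) * (∫ t in Ioi (0:ℝ), t ^ (β+1) * vg x α t) ^ 2 := by
  set μ' := volume.restrict (Ioi (0:ℝ)) with hμ'
  set w : ℝ → ℝ := fun t => ph (t + α + 1) - Real.log x with hw
  have i1 : Integrable (fun t => t ^ (β+1) * vg x α t) μ' :=
    integrable_ts hx hα (by linarith)
  have i2 : Integrable (fun t => t ^ (β+2) * vg x α t) μ' :=
    integrable_ts hx hα (by linarith)
  have iq : Integrable (fun t => t ^ (β+1) * vg x α t * w t) μ' :=
    integrable_wts hx hα (by linarith)
  have ir : Integrable (fun t => t ^ (β+2) * vg x α t * w t) μ' :=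
    integrable_wts hx hα (by linarith)
  have h_ar : Integrable (fun z : ℝ × ℝ =>
      (z.1 ^ (β+1) * vg x α z.1) * (z.2 ^ (β+2) * vg x α z.2 * w z.2)) (μ'.prod μ') :=
    i1.mul_prod ir
  have h_bq : Integrable (fun z : ℝ × ℝ =>
      (z.1 ^ (β+2) * vg x α z.1) * (z.2 ^ (β+1) * vg x α z.2 * w z.2)) (μ'.prod μ') :=
    i2.mul_prod iq
  have h_ra : Integrable (fun z : ℝ × ℝ =>
      (z.1 ^ (β+2) * vg x α z.1 * w z.1) * (z.2 ^ (β+1) * vg x α z.2)) (μ'.prod μ') :=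
    ir.mul_prod i1
  have h_qb : Integrable (fun z : ℝ × ℝ =>
      (z.1 ^ (β+1) * vg x α z.1 * w z.1) * (z.2 ^ (β+2) * vg x α z.2)) (μ'.prod μ') :=
    iq.mul_prod i2
  have h_a : Integrable (fun z : ℝ × ℝ =>
      (z.1 ^ (β+1) * vg x α z.1) * (z.2 ^ (β+2) * vg x α z.2 * w z.2)
      + (z.1 ^ (β+2) * vg x α z.1 * w z.1) * (z.2 ^ (β+1) * vg x α z.2)) (μ'.prod μ') :=
    h_ar.add h_ra
  have h_b : Integrable (fun z : ℝ × ℝ =>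
      (z.1 ^ (β+2) * vg x α z.1) * (z.2 ^ (β+1) * vg x α z.2 * w z.2)
      + (z.1 ^ (β+1) * vg x α z.1 * w z.1) * (z.2 ^ (β+2) * vg x α z.2)) (μ'.prod μ') :=
    h_bq.add h_qb
  have hae : ∀ᵐ z : ℝ × ℝ ∂(μ'.prod μ'), z.1 ∈ Ioi (0:ℝ) ∧ z.2 ∈ Ioi (0:ℝ) := by
    rw [hμ', Measure.prod_restrict]
    filter_upwards [ae_restrict_mem (measurableSet_Ioi.prod measurableSet_Ioi)] with z hz
    exact hz
  have key : 0 ≤ ∫ z : ℝ × ℝ,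
      (((z.1 ^ (β+1) * vg x α z.1) * (z.2 ^ (β+2) * vg x α z.2 * w z.2)
        + (z.1 ^ (β+2) * vg x α z.1 * w z.1) * (z.2 ^ (β+1) * vg x α z.2))
      - ((z.1 ^ (β+2) * vg x α z.1) * (z.2 ^ (β+1) * vg x α z.2 * w z.2)
        + (z.1 ^ (β+1) * vg x α z.1 * w z.1) * (z.2 ^ (β+2) * vg x α z.2))) ∂(μ'.prod μ') := by
    refine integral_nonneg_of_ae ?_
    filter_upwards [hae] with z hz
    obtain ⟨ht, hs⟩ := hz
    have ht0 : (0:ℝ) < z.1 := ht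
    have hs0 : (0:ℝ) < z.2 := hs
    have e2 : z.1 ^ (β+2) = z.1 ^ (β+1) * z.1 := by
      rw [show β+2 = β+1+1 by ring, Real.rpow_add ht0, Real.rpow_one]
    have f2 : z.2 ^ (β+2) = z.2 ^ (β+1) * z.2 := by
      rw [show β+2 = β+1+1 by ring, Real.rpow_add hs0, Real.rpow_one]
    have expand : ((z.1 ^ (β+1) * vg x α z.1) * (z.2 ^ (β+2) * vg x α z.2 * w z.2)
        + (z.1 ^ (β+2) * vg x α z.1 * w z.1) * (z.2 ^ (β+1) * vg x α z.2))
      - ((z.1 ^ (β+2) * vg x α z.1) * (z.2 ^ (β+1) * vg x α z.2 * w z.2)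
        + (z.1 ^ (β+1) * vg x α z.1 * w z.1) * (z.2 ^ (β+2) * vg x α z.2)) =
        ((z.1 ^ (β+1) * z.2 ^ (β+1)) * (vg x α z.1 * vg x α z.2))
          * ((z.1 - z.2) * (w z.1 - w z.2)) := by
      rw [e2, f2]; ring
    rw [expand]
    have hpre : 0 ≤ (z.1 ^ (β+1) * z.2 ^ (β+1)) * (vg x α z.1 * vg x α z.2) :=
      mul_nonneg (mul_nonneg (Real.rpow_nonneg ht0.le _) (Real.rpow_nonneg hs0.le _))
        (mul_nonneg (vg_pos x α z.1).le (vg_pos x α z.2).le)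
    refine mul_nonneg hpre ?_
    rcases le_total z.1 z.2 with hle | hle
    · have hmono : ph (z.1 + α + 1) ≤ ph (z.2 + α + 1) :=
        ph_mono (by linarith) (by linarith)
      have hw1 : w z.1 - w z.2 ≤ 0 := by simp only [hw]; linarith
      nlinarith [hw1, (by linarith : z.1 - z.2 ≤ 0)]
    · have hmono : ph (z.2 + α + 1) ≤ ph (z.1 + α + 1) :=
        ph_mono (by linarith) (by linarith)
      have hw1 : 0 ≤ w z.1 - w z.2 := by simp only [hw]; linarith
      exact mul_nonneg (by linarith) hw1
  have p1 : (∫ z : ℝ × ℝ, (z.1 ^ (β+1) * vg x α z.1) * (z.2 ^ (β+2) * vg x α z.2 * w z.2)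
      ∂(μ'.prod μ')) = (∫ t, t ^ (β+1) * vg x α t ∂μ')
        * ∫ t, t ^ (β+2) * vg x α t * w t ∂μ' :=
    integral_prod_mul (fun t => t ^ (β+1) * vg x α t) (fun t => t ^ (β+2) * vg x α t * w t)
  have p2 : (∫ z : ℝ × ℝ, (z.1 ^ (β+2) * vg x α z.1 * w z.1) * (z.2 ^ (β+1) * vg x α z.2)
      ∂(μ'.prod μ')) = (∫ t, t ^ (β+2) * vg x α t * w t ∂μ')
        * ∫ t, t ^ (β+1) * vg x α t ∂μ' :=
    integral_prod_mul (fun t => t ^ (β+2) * vg x α t * w t) (fun t => t ^ (β+1) * vg x α t)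
  have p3 : (∫ z : ℝ × ℝ, (z.1 ^ (β+2) * vg x α z.1) * (z.2 ^ (β+1) * vg x α z.2 * w z.2)
      ∂(μ'.prod μ')) = (∫ t, t ^ (β+2) * vg x α t ∂μ')
        * ∫ t, t ^ (β+1) * vg x α t * w t ∂μ' :=
    integral_prod_mul (fun t => t ^ (β+2) * vg x α t) (fun t => t ^ (β+1) * vg x α t * w t)
  have p4 : (∫ z : ℝ × ℝ, (z.1 ^ (β+1) * vg x α z.1 * w z.1) * (z.2 ^ (β+2) * vg x α z.2)
      ∂(μ'.prod μ')) = (∫ t, t ^ (β+1) * vg x α t * w t ∂μ')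
        * ∫ t, t ^ (β+2) * vg x α t ∂μ' :=
    integral_prod_mul (fun t => t ^ (β+1) * vg x α t * w t) (fun t => t ^ (β+2) * vg x α t)
  rw [integral_sub h_a h_b, integral_add h_ar h_ra, integral_add h_bq h_qb,
    p1, p2, p3, p4] at key
  -- integration by parts identities
  have hibp1 := ibp hx hα (show (0:ℝ) < β + 1 by linarith)
  rw [show β + 1 - 1 = β by ring] at hibp1
  have hibp2 := ibp hx hα (show (0:ℝ) < β + 2 by linarith)
  rw [show β + 2 - 1 = β + 1 by ring] at hibp2
  simp only [hw] at key
  rw [← hμ'] at hibp1 hibp2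
  rw [← hibp1, ← hibp2] at key
  nlinarith [key]

end VolterraAux

namespace VolterraAux

lemma mu_eq {x α : ℝ} (hx : 0 < x) (hα : -1 < α) {b : ℝ} (hb : 0 < b + 1) :
    volterraMu x b α = (∫ t in Ioi (0:ℝ), t ^ b * vg x α t) / Real.Gamma (b + 1) := by
  rw [volterraMu]
  rw [setIntegral_congr_fun measurableSet_Ioi
    (g := fun t => (t ^ b * vg x α t) * (Real.Gamma (b + 1))⁻¹ )
    (fun t ht => ?_)]
  · rw [integral_mul_const, div_eq_mul_inv]
  · dsimp only
    have ht0 : (0:ℝ) < t := ht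
    have hc : 0 < t + α + 1 := by linarith
    rw [vg_eq hx hc]
    have h1 : Real.Gamma (t + α + 1) ≠ 0 := gamma_ne hc
    have h2 : Real.Gamma (b + 1) ≠ 0 := gamma_ne hb
    field_simp

end VolterraAux

/-- Double Turán type inequality in the parameter `β`. -/
theorem volterraMu_turan_beta (x α β : ℝ) (hx : 0 < x) (hα : -1 < α) (hβ : -1 < β) :
    0 ≤ volterraMu x (β + 1) α ^ 2 - volterraMu x β α * volterraMu x (β + 2) α ∧
    volterraMu x (β + 1) α ^ 2 - volterraMu x β α * volterraMu x (β + 2) α ≤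
      volterraMu x (β + 1) α ^ 2 / (β + 2) := by
  have hb1 : (0:ℝ) < β + 1 := by linarith
  have hb2 : (0:ℝ) < β + 2 := by linarith
  set M0 := ∫ t in Ioi (0:ℝ), t ^ β * VolterraAux.vg x α t with hM0
  set M1 := ∫ t in Ioi (0:ℝ), t ^ (β+1) * VolterraAux.vg x α t with hM1
  set M2 := ∫ t in Ioi (0:ℝ), t ^ (β+2) * VolterraAux.vg x α t with hM2
  set G := Real.Gamma (β + 1) with hGdef
  have hG : 0 < G := Real.Gamma_pos_of_pos hb1
  have hG2 : Real.Gamma (β + 2) = (β + 1) * G := by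
    rw [show (β+2:ℝ) = (β+1)+1 by ring, Real.Gamma_add_one hb1.ne', hGdef]
  have hG3 : Real.Gamma (β + 3) = (β + 2) * ((β + 1) * G) := by
    rw [show (β+3:ℝ) = (β+2)+1 by ring, Real.Gamma_add_one hb2.ne', hG2]
  have hμ0 : volterraMu x β α = M0 / G := VolterraAux.mu_eq hx hα hb1
  have hμ1 : volterraMu x (β+1) α = M1 / ((β + 1) * G) := by
    rw [VolterraAux.mu_eq hx hα (by linarith : (0:ℝ) < (β+1)+1)]
    rw [show (β+1)+1 = β+2 by ring, hG2]
  have hμ2 : volterraMu x (β+2) α = M2 / ((β + 2) * ((β + 1) * G)) := by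
    rw [VolterraAux.mu_eq hx hα (by linarith : (0:ℝ) < (β+2)+1)]
    rw [show (β+2)+1 = β+3 by ring, hG3]
  have hcs : M1 ^ 2 ≤ M0 * M2 := VolterraAux.cs hx hα hβ
  have hturan : (β+1) * (M0 * M2) ≤ (β+2) * M1 ^ 2 := VolterraAux.turan hx hα hβ
  rw [hμ0, hμ1, hμ2]
  have hGne : G ≠ 0 := hG.ne'
  have h1ne : (β+1:ℝ) ≠ 0 := hb1.ne'
  have h2ne : (β+2:ℝ) ≠ 0 := hb2.ne'
  constructor
  · have heq : (M1 / ((β + 1) * G)) ^ 2 - M0 / G * (M2 / ((β + 2) * ((β + 1) * G))) =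
        ((β+2) * M1 ^ 2 - (β+1) * (M0 * M2)) / ((β+1)^2 * (β+2) * G^2) := by
      field_simp
    rw [heq]
    apply div_nonneg (by linarith)
    positivity
  · have heq2 : (M1 / ((β + 1) * G)) ^ 2 / (β + 2)
        - ((M1 / ((β + 1) * G)) ^ 2 - M0 / G * (M2 / ((β + 2) * ((β + 1) * G)))) =
        (M0 * M2 - M1 ^ 2) / ((β+1) * (β+2) * G^2) := by
      field_simp
      ring
    have hnn : 0 ≤ (M0 * M2 - M1 ^ 2) / ((β+1) * (β+2) * G^2) :=
      div_nonneg (by linarith) (by positivity)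
    linarith [heq2]
end
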